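/- arXiv:1301.3559 — 5 statements merged into one kernel-verified Lean document; each statement's English description precedes it below -/
import Mathlib

section
/- Let k ≥ 1 be an integer, a_0 < a_1 < … < a_k real numbers, r > 0, and s_i ∈ (a_{i-1}, a_i) for i = 1, …, k. Define x_j² := r² · (∏_{i=1}^{k} (s_i − a_j)) / (∏_{i=0, i≠j}^{k} (a_i − a_j)) for j = 0, …, k. Then for each i = 1, …, k the identity ∑_{j=0}^{k} x_j²/(s_i − a_j)² = −r² · (∏_{j=1, j≠i}^{k} (s_i − s_j)) / (∏_{j=0}^{k} (s_i − a_j)) holds. -/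
open Polynomial Finset

lemma key_sum {F : Type*} [Field F] {ι : Type*} [DecidableEq ι] (t : Finset ι) (v : ι → F)
    (hvs : Set.InjOn v ↑t) (f : F[X]) (hdeg : f.degree < ((#t - 1 : ℕ) : WithBot ℕ)) :
    ∑ i ∈ t, f.eval (v i) * ∏ j ∈ t.erase i, (v i - v j)⁻¹ = 0 := by
  have hd2 : f.degree < (#t : WithBot ℕ) :=
    lt_of_lt_of_le hdeg (by exact_mod_cast Nat.sub_le _ _)
  have hf := Lagrange.eq_interpolate hvs hd2
  have h0 : f.coeff (#t - 1) = 0 := coeff_eq_zero_of_degree_lt hdeg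
  nth_rewrite 1 [hf] at h0
  rw [Lagrange.interpolate_apply, finset_sum_coeff] at h0
  rw [← h0]
  refine Finset.sum_congr rfl fun i hi => ?_
  rw [coeff_C_mul]
  congr 1
  have hb : (Lagrange.basis t v i).coeff (#t - 1) = (Lagrange.basis t v i).leadingCoeff := by
    rw [Polynomial.leadingCoeff, Lagrange.natDegree_basis hvs hi]
  rw [hb, Lagrange.basis, leadingCoeff_prod]
  refine Finset.prod_congr rfl fun j hj => ?_
  rw [Lagrange.basisDivisor, leadingCoeff_mul, leadingCoeff_C,
    (monic_X_sub_C (v j)).leadingCoeff, mul_one]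

lemma prod_neg' {ι : Type*} (t : Finset ι) (g : ι → ℝ) :
    ∏ m ∈ t, (-g m) = (-1 : ℝ) ^ #t * ∏ m ∈ t, g m := by
  rw [← Finset.prod_const, ← Finset.prod_mul_distrib]
  simp

/-- **Scale factors of sphero-conal coordinates** (equation (2.8) of the paper).
If `x_j² = r² ∏ᵢ (s_i − a_j) / ∏_{i ≠ j} (a_i − a_j)`, then
`∑_j x_j²/(s_i − a_j)² = −r² ∏_{j ≠ i}(s_i − s_j) / ∏_j (s_i − a_j)` (which equals `4 H_{s_i}²`). -/
theorem stmt_1 (k : ℕ) (hk : 1 ≤ k) (a : Fin (k + 1) → ℝ) (ha : StrictMono a)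
    (r : ℝ) (hr : 0 < r) (s : Fin k → ℝ)
    (hs : ∀ i : Fin k, a i.castSucc < s i ∧ s i < a i.succ)
    (xsq : Fin (k + 1) → ℝ)
    (hxsq : ∀ j, xsq j =
      r ^ 2 * (∏ i : Fin k, (s i - a j)) / ∏ i ∈ Finset.univ.erase j, (a i - a j)) :
    ∀ i : Fin k, ∑ j, xsq j / (s i - a j) ^ 2 =
      -(r ^ 2) * (∏ j ∈ Finset.univ.erase i, (s i - s j)) /
        ∏ j : Fin (k + 1), (s i - a j) := by
  intro i
  classical
  have hsa : ∀ j : Fin (k + 1), s i ≠ a j := by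
    intro j
    rcases le_or_gt j i.castSucc with h | h
    · exact ne_of_gt (lt_of_le_of_lt (ha.monotone h) (hs i).1)
    · have : i.succ ≤ j := h
      exact ne_of_lt (lt_of_lt_of_le (hs i).2 (ha.monotone this))
  set v : Fin (k + 2) → ℝ := Fin.snoc a (s i) with hv
  have hvc : ∀ j : Fin (k + 1), v j.castSucc = a j := fun j => Fin.snoc_castSucc _ _ _
  have hvl : v (Fin.last (k + 1)) = s i := Fin.snoc_last _ _
  have hinj : Function.Injective v := by
    intro x y hxy
    rcases Fin.eq_castSucc_or_eq_last x with ⟨x', rfl⟩ | rfl <;>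
      rcases Fin.eq_castSucc_or_eq_last y with ⟨y', rfl⟩ | rfl
    · rw [hvc, hvc] at hxy; exact congrArg _ (ha.injective hxy)
    · rw [hvc, hvl] at hxy; exact absurd hxy.symm (hsa x')
    · rw [hvc, hvl] at hxy; exact absurd hxy (hsa y')
    · rfl
  set f : Polynomial ℝ := Lagrange.nodal ((Finset.univ : Finset (Fin k)).erase i) s with hf
  have hcard : #((Finset.univ : Finset (Fin k)).erase i) = k - 1 := by
    rw [Finset.card_erase_of_mem (Finset.mem_univ i), Finset.card_univ, Fintype.card_fin]
  have hdeg : f.degree < ((#(Finset.univ : Finset (Fin (k + 2))) - 1 : ℕ) : WithBot ℕ) := by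
    rw [hf, Lagrange.degree_nodal, hcard, Finset.card_univ, Fintype.card_fin]
    exact_mod_cast (by omega : k - 1 < k + 2 - 1)
  have hkey := key_sum Finset.univ v hinj.injOn f hdeg
  rw [Fin.sum_univ_castSucc] at hkey
  have hlast_erase : (Finset.univ : Finset (Fin (k + 2))).erase (Fin.last (k + 1)) =
      (Finset.univ : Finset (Fin (k + 1))).image Fin.castSucc := by
    ext m
    simp only [Finset.mem_erase, Finset.mem_univ, and_true, Finset.mem_image, true_and]
    constructor
    · intro h; exact Fin.exists_castSucc_eq.mpr h
    · rintro ⟨m', rfl⟩; exact (Fin.castSucc_lt_last m').ne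
  have hcs_erase : ∀ j : Fin (k + 1), (Finset.univ : Finset (Fin (k + 2))).erase j.castSucc =
      insert (Fin.last (k + 1)) (((Finset.univ : Finset (Fin (k + 1))).erase j).image
        Fin.castSucc) := by
    intro j
    ext m
    simp only [Finset.mem_erase, Finset.mem_univ, and_true, Finset.mem_insert, Finset.mem_image,
      true_and]
    constructor
    · intro hm
      rcases Fin.eq_castSucc_or_eq_last m with ⟨m', rfl⟩ | rfl
      · exact Or.inr ⟨m', fun h => hm (by rw [h]), rfl⟩
      · exact Or.inl rfl
    · rintro (rfl | ⟨m', hm', rfl⟩)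
      · exact (Fin.castSucc_lt_last j).ne'
      · exact fun h => hm' (Fin.castSucc_injective _ h)
  have hlast : f.eval (v (Fin.last (k + 1))) *
      ∏ m ∈ (Finset.univ : Finset (Fin (k + 2))).erase (Fin.last (k + 1)),
        (v (Fin.last (k + 1)) - v m)⁻¹ =
      (∏ j ∈ Finset.univ.erase i, (s i - s j)) * (∏ j : Fin (k + 1), (s i - a j))⁻¹ := by
    rw [hvl, hlast_erase, Finset.prod_image (fun x _ y _ h => Fin.castSucc_injective _ h)]
    simp only [hvc]
    rw [hf, Lagrange.eval_nodal, ← Finset.prod_inv_distrib]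
  have hnode : ∀ j : Fin (k + 1),
      xsq j / (s i - a j) ^ 2 = r ^ 2 * (f.eval (v j.castSucc) *
        ∏ m ∈ (Finset.univ : Finset (Fin (k + 2))).erase j.castSucc, (v j.castSucc - v m)⁻¹) := by
    intro j
    have hne1 : s i - a j ≠ 0 := sub_ne_zero.mpr (hsa j)
    have hne2 : ∏ m ∈ Finset.univ.erase j, (a m - a j) ≠ 0 := by
      refine Finset.prod_ne_zero_iff.mpr fun m hm => sub_ne_zero.mpr ?_
      exact fun h => (Finset.mem_erase.mp hm).1 (ha.injective h)
    rw [hcs_erase j, Finset.prod_insert (by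
        simp only [Finset.mem_image]
        rintro ⟨m', _, h⟩
        exact (Fin.castSucc_lt_last m').ne h), Finset.prod_image (fun x _ y _ h => Fin.castSucc_injective _ h)]
    simp only [hvc, hvl]
    rw [hf, Lagrange.eval_nodal, hxsq j]
    rw [← Finset.mul_prod_erase Finset.univ (fun m => s m - a j) (Finset.mem_univ i)]
    have e1 : ∏ m ∈ Finset.univ.erase i, (a j - s m) =
        (-1 : ℝ) ^ (k - 1) * ∏ m ∈ Finset.univ.erase i, (s m - a j) := by
      rw [← hcard, ← prod_neg']
      exact Finset.prod_congr rfl fun m _ => (neg_sub _ _).symm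
    have e2 : (∏ m ∈ Finset.univ.erase j, (a j - a m))⁻¹ =
        (-1 : ℝ) ^ k * (∏ m ∈ Finset.univ.erase j, (a m - a j))⁻¹ := by
      have hc : #((Finset.univ : Finset (Fin (k + 1))).erase j) = k := by
        rw [Finset.card_erase_of_mem (Finset.mem_univ j), Finset.card_univ, Fintype.card_fin,
          Nat.add_sub_cancel]
      rw [show ∏ m ∈ Finset.univ.erase j, (a j - a m) =
        ∏ m ∈ Finset.univ.erase j, -(a m - a j) from
        Finset.prod_congr rfl fun m _ => (neg_sub _ _).symm, prod_neg', hc, mul_inv]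
      congr 1
      rw [← inv_pow, inv_neg, inv_one]
    rw [Finset.prod_inv_distrib, e1, e2]
    have h3 : (a j - s i)⁻¹ = -((s i - a j)⁻¹) := by rw [← inv_neg, neg_sub]
    rw [h3]
    have hδε : (-1 : ℝ) ^ k = -(-1 : ℝ) ^ (k - 1) := by
      conv_lhs => rw [show k = (k - 1) + 1 by omega]
      rw [pow_succ]
      ring
    rw [hδε]
    have hε2 : (-1 : ℝ) ^ ((k - 1) * 2) = 1 := by
      exact Even.neg_one_pow ⟨k - 1, by ring⟩
    field_simp
    ring_nf
    rw [hε2]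
    simp only [neg_add_eq_sub, mul_one]
  calc ∑ j, xsq j / (s i - a j) ^ 2
      = r ^ 2 * ∑ j : Fin (k + 1), (f.eval (v j.castSucc) *
        ∏ m ∈ (Finset.univ : Finset (Fin (k + 2))).erase j.castSucc, (v j.castSucc - v m)⁻¹) := by
        rw [Finset.mul_sum]; exact Finset.sum_congr rfl fun j _ => hnode j
    _ = r ^ 2 * (-((∏ j ∈ Finset.univ.erase i, (s i - s j)) *
        (∏ j : Fin (k + 1), (s i - a j))⁻¹)) := by
        rw [← hlast, eq_neg_of_add_eq_zero_left hkey]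
    _ = -(r ^ 2) * (∏ j ∈ Finset.univ.erase i, (s i - s j)) /
        ∏ j : Fin (k + 1), (s i - a j) := by
        rw [div_eq_mul_inv]; ring
end

section
/- Fix real numbers a_0 < a_1 < a_2 < a_3. For (x,y,z) ∈ ℝ³ write ρ² = x² + y² + z² and consider the cubic polynomial p(s) = (ρ² − 1)²(s − a_1)(s − a_2)(s − a_3) + 4x²(s − a_0)(s − a_2)(s − a_3) + 4y²(s − a_0)(s − a_1)(s − a_3) + 4z²(s − a_0)(s − a_1)(s − a_2). Then for every (x,y,z) ∈ ℝ³, p has degree exactly 3 and possesses three real roots s_1 ≤ s_2 ≤ s_3 (counted with multiplicity) satisfying a_0 ≤ s_1 ≤ a_1 ≤ s_2 ≤ a_2 ≤ s_3 ≤ a_3. If moreover x > 0, y > 0, z > 0 and x² + y² + z² > 1, then the roots satisfy the strict inequalities a_0 < s_1 < a_1 < s_2 < a_2 < s_3 < a_3. -/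
private lemma sort3 (r1 r2 r3 : ℝ) : ∃ t1 t2 t3 : ℝ, t1 ≤ t2 ∧ t2 ≤ t3 ∧
    ∀ s : ℝ, (s - r1) * (s - r2) * (s - r3) = (s - t1) * (s - t2) * (s - t3) := by
  rcases le_total r1 r2 with h12 | h12 <;> rcases le_total r2 r3 with h23 | h23 <;>
    rcases le_total r1 r3 with h13 | h13
  · exact ⟨r1, r2, r3, h12, h23, fun s => by ring⟩
  · exact ⟨r1, r2, r3, h12, h23, fun s => by ring⟩
  · exact ⟨r1, r3, r2, h13, h23, fun s => by ring⟩
  · exact ⟨r3, r1, r2, h13, h12, fun s => by ring⟩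
  · exact ⟨r2, r1, r3, h12, h13, fun s => by ring⟩
  · exact ⟨r2, r3, r1, h23, h13, fun s => by ring⟩
  · exact ⟨r2, r1, r3, h12, h13, fun s => by ring⟩
  · exact ⟨r3, r2, r1, h23, h12, fun s => by ring⟩

private lemma cubic_factor (c b e d a0 a1 a2 a3 : ℝ) (hc : 0 < c)
    (h01 : a0 < a1) (h12 : a1 < a2) (h23 : a2 < a3)
    (h0 : c*a0^3+b*a0^2+e*a0+d ≤ 0) (h1 : 0 ≤ c*a1^3+b*a1^2+e*a1+d)
    (h2 : c*a2^3+b*a2^2+e*a2+d ≤ 0) (h3 : 0 ≤ c*a3^3+b*a3^2+e*a3+d) :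
    ∃ t1 t2 t3 : ℝ, a0 ≤ t1 ∧ t1 ≤ a1 ∧ a1 ≤ t2 ∧ t2 ≤ a2 ∧ a2 ≤ t3 ∧ t3 ≤ a3 ∧
      ∀ s : ℝ, c*s^3+b*s^2+e*s+d = c*(s-t1)*(s-t2)*(s-t3) := by
  -- first root in [a0, a1]
  have hcont : ∀ u v : ℝ, ContinuousOn (fun s : ℝ => c*s^3+b*s^2+e*s+d) (Set.Icc u v) := by
    intro u v
    exact (Continuous.continuousOn (by fun_prop))
  have hiv1 := intermediate_value_Icc h01.le (hcont a0 a1)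
  have h0mem : (0:ℝ) ∈ Set.Icc (c*a0^3+b*a0^2+e*a0+d) (c*a1^3+b*a1^2+e*a1+d) :=
    ⟨h0, h1⟩
  obtain ⟨r1, hr1mem, hr1⟩ := hiv1 h0mem
  simp only at hr1
  obtain ⟨hr1l, hr1r⟩ := hr1mem
  -- quadratic factor g
  set g : ℝ → ℝ := fun s => c*s^2+(b+c*r1)*s+(e+b*r1+c*r1^2) with hg
  have hfg : ∀ s : ℝ, c*s^3+b*s^2+e*s+d = (s - r1) * g s := by
    intro s; simp only [hg]; linear_combination hr1
  have hga2 : g a2 ≤ 0 := by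
    have h := hfg a2
    by_contra hpos
    push_neg at hpos
    have : 0 < (a2 - r1) * g a2 := mul_pos (by linarith) hpos
    linarith
  have hga3 : 0 ≤ g a3 := by
    have h := hfg a3
    by_contra hneg
    push_neg at hneg
    have : (a3 - r1) * g a3 < 0 := mul_neg_of_pos_of_neg (by linarith) hneg
    linarith
  have hcontg : ContinuousOn g (Set.Icc a2 a3) := Continuous.continuousOn (by fun_prop)
  obtain ⟨r3, hr3mem, hr3⟩ := intermediate_value_Icc h23.le hcontg ⟨hga2, hga3⟩
  simp only [hg] at hr3
  obtain ⟨hr3l, hr3r⟩ := hr3mem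
  set r2 : ℝ := -(b + c*r1)/c - r3 with hr2def
  have hcr2 : c*r2 + (b + c*r1) + c*r3 = 0 := by
    rw [hr2def]; field_simp; ring
  have hgr : ∀ s : ℝ, g s = c*(s - r2)*(s - r3) := by
    intro s; simp only [hg]
    linear_combination (s - r3) * hcr2 + hr3
  have hprod : ∀ s : ℝ, c*s^3+b*s^2+e*s+d = c*(s-r1)*(s-r2)*(s-r3) := by
    intro s; rw [hfg s, hgr s]; ring
  obtain ⟨t1, t2, t3, ht12, ht23, hsort⟩ := sort3 r1 r2 r3
  have hfact : ∀ s : ℝ, c*s^3+b*s^2+e*s+d = c*(s-t1)*(s-t2)*(s-t3) := by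
    intro s; rw [hprod s]; linear_combination c * hsort s
  -- now interlacing
  have H0 := (hfact a0) ▸ h0
  have H1 := (hfact a1) ▸ h1
  have H2 := (hfact a2) ▸ h2
  have H3 := (hfact a3) ▸ h3
  -- (1) t1 ≤ a1
  have ht1a1 : t1 ≤ a1 := by
    by_contra hcon; push_neg at hcon
    have hp : 0 < c*((t1-a1)*((t2-a1)*(t3-a1))) :=
      mul_pos hc (mul_pos (by linarith) (mul_pos (by linarith) (by linarith)))
    have hkey : c*(a1-t1)*(a1-t2)*(a1-t3) = -(c*((t1-a1)*((t2-a1)*(t3-a1)))) := by ring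
    rw [hkey] at H1; linarith
  -- (2) a2 ≤ t3
  have ha2t3 : a2 ≤ t3 := by
    by_contra hcon; push_neg at hcon
    have hp : 0 < c*((a2-t1)*((a2-t2)*(a2-t3))) :=
      mul_pos hc (mul_pos (by linarith) (mul_pos (by linarith) (by linarith)))
    have hkey : c*(a2-t1)*(a2-t2)*(a2-t3) = c*((a2-t1)*((a2-t2)*(a2-t3))) := by ring
    rw [hkey] at H2; linarith
  -- (3) t2 ≤ a2
  have ht2a2 : t2 ≤ a2 := by
    by_contra hcon; push_neg at hcon
    have hp : 0 < c*((a2-t1)*((t2-a2)*(t3-a2))) :=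
      mul_pos hc (mul_pos (by linarith) (mul_pos (by linarith) (by linarith)))
    have hkey : c*(a2-t1)*(a2-t2)*(a2-t3) = c*((a2-t1)*((t2-a2)*(t3-a2))) := by ring
    rw [hkey] at H2; linarith
  -- (4) t3 ≤ a3
  have ht3a3 : t3 ≤ a3 := by
    by_contra hcon; push_neg at hcon
    have hp : 0 < c*((a3-t1)*((a3-t2)*(t3-a3))) :=
      mul_pos hc (mul_pos (by linarith) (mul_pos (by linarith) (by linarith)))
    have hkey : c*(a3-t1)*(a3-t2)*(a3-t3) = -(c*((a3-t1)*((a3-t2)*(t3-a3)))) := by ring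
    rw [hkey] at H3; linarith
  -- (5) a1 ≤ t2
  have ha1t2 : a1 ≤ t2 := by
    by_contra hcon; push_neg at hcon
    have hp : 0 < c*((a1-t1)*((a1-t2)*(t3-a1))) :=
      mul_pos hc (mul_pos (by linarith) (mul_pos (by linarith) (by linarith)))
    have hkey : c*(a1-t1)*(a1-t2)*(a1-t3) = -(c*((a1-t1)*((a1-t2)*(t3-a1)))) := by ring
    rw [hkey] at H1; linarith
  -- (6) a0 ≤ t1
  have ha0t1 : a0 ≤ t1 := by
    by_contra hcon; push_neg at hcon
    have hp : 0 < c*((a0-t1)*((t2-a0)*(t3-a0))) :=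
      mul_pos hc (mul_pos (by linarith) (mul_pos (by linarith) (by linarith)))
    have hkey : c*(a0-t1)*(a0-t2)*(a0-t3) = c*((a0-t1)*((t2-a0)*(t3-a0))) := by ring
    rw [hkey] at H0; linarith
  exact ⟨t1, t2, t3, ha0t1, ht1a1, ha1t2, ht2a2, ha2t3, ht3a3, hfact⟩

/-- **5-cyclide coordinates of an arbitrary point** (Section 4 of the paper).
For every `(x,y,z) ∈ ℝ³` the cubic
`p(s) = (ρ²−1)²(s−a₁)(s−a₂)(s−a₃) + 4x²(s−a₀)(s−a₂)(s−a₃) + 4y²(s−a₀)(s−a₁)(s−a₃)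
      + 4z²(s−a₀)(s−a₁)(s−a₂)`
has degree exactly 3 (its leading coefficient `(ρ²−1)² + 4x² + 4y² + 4z²` is nonzero)
and factors as `p(s) = c (s−s₁)(s−s₂)(s−s₃)` with `a₀ ≤ s₁ ≤ a₁ ≤ s₂ ≤ a₂ ≤ s₃ ≤ a₃`;
if `x,y,z > 0` and `x²+y²+z² > 1` all these inequalities are strict. -/
theorem stmt_4 (a0 a1 a2 a3 : ℝ) (h01 : a0 < a1) (h12 : a1 < a2) (h23 : a2 < a3)
    (x y z : ℝ) :
    ∃ s1 s2 s3 : ℝ,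
      (a0 ≤ s1 ∧ s1 ≤ a1 ∧ a1 ≤ s2 ∧ s2 ≤ a2 ∧ a2 ≤ s3 ∧ s3 ≤ a3) ∧
      ((x ^ 2 + y ^ 2 + z ^ 2 - 1) ^ 2 + 4 * x ^ 2 + 4 * y ^ 2 + 4 * z ^ 2) ≠ 0 ∧
      (∀ s : ℝ,
        (x ^ 2 + y ^ 2 + z ^ 2 - 1) ^ 2 * (s - a1) * (s - a2) * (s - a3)
          + 4 * x ^ 2 * (s - a0) * (s - a2) * (s - a3)
          + 4 * y ^ 2 * (s - a0) * (s - a1) * (s - a3)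
          + 4 * z ^ 2 * (s - a0) * (s - a1) * (s - a2)
        = ((x ^ 2 + y ^ 2 + z ^ 2 - 1) ^ 2 + 4 * x ^ 2 + 4 * y ^ 2 + 4 * z ^ 2)
            * (s - s1) * (s - s2) * (s - s3)) ∧
      (0 < x → 0 < y → 0 < z → 1 < x ^ 2 + y ^ 2 + z ^ 2 →
        a0 < s1 ∧ s1 < a1 ∧ a1 < s2 ∧ s2 < a2 ∧ a2 < s3 ∧ s3 < a3) := by
  set W : ℝ := (x ^ 2 + y ^ 2 + z ^ 2 - 1) ^ 2 with hW
  set X : ℝ := 4 * x ^ 2 with hX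
  set Y : ℝ := 4 * y ^ 2 with hY
  set Z : ℝ := 4 * z ^ 2 with hZ
  set c : ℝ := W + X + Y + Z with hcdef
  have hc : 0 < c := by
    have : c = (x ^ 2 + y ^ 2 + z ^ 2 + 1) ^ 2 := by rw [hcdef, hW, hX, hY, hZ]; ring
    rw [this]; positivity
  set b : ℝ := -(W*(a1+a2+a3)+X*(a0+a2+a3)+Y*(a0+a1+a3)+Z*(a0+a1+a2)) with hb
  set e : ℝ := W*(a1*a2+a1*a3+a2*a3)+X*(a0*a2+a0*a3+a2*a3)+Y*(a0*a1+a0*a3+a1*a3)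
      +Z*(a0*a1+a0*a2+a1*a2) with he
  set d : ℝ := -(W*(a1*a2*a3)+X*(a0*a2*a3)+Y*(a0*a1*a3)+Z*(a0*a1*a2)) with hd
  have hWn : 0 ≤ W := by rw [hW]; positivity
  have hXn : 0 ≤ X := by rw [hX]; positivity
  have hYn : 0 ≤ Y := by rw [hY]; positivity
  have hZn : 0 ≤ Z := by rw [hZ]; positivity
  -- node values
  have hv0 : c*a0^3+b*a0^2+e*a0+d = W*((a0-a1)*((a0-a2)*(a0-a3))) := by
    rw [hcdef, hb, he, hd]; ring
  have hv1 : c*a1^3+b*a1^2+e*a1+d = X*((a1-a0)*((a1-a2)*(a1-a3))) := by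
    rw [hcdef, hb, he, hd]; ring
  have hv2 : c*a2^3+b*a2^2+e*a2+d = Y*((a2-a0)*((a2-a1)*(a2-a3))) := by
    rw [hcdef, hb, he, hd]; ring
  have hv3 : c*a3^3+b*a3^2+e*a3+d = Z*((a3-a0)*((a3-a1)*(a3-a2))) := by
    rw [hcdef, hb, he, hd]; ring
  have hq0 : (a0-a1)*((a0-a2)*(a0-a3)) < 0 :=
    mul_neg_of_neg_of_pos (by linarith) (mul_pos_of_neg_of_neg (by linarith) (by linarith))
  have hq1 : 0 < (a1-a0)*((a1-a2)*(a1-a3)) :=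
    mul_pos (by linarith) (mul_pos_of_neg_of_neg (by linarith) (by linarith))
  have hq2 : (a2-a0)*((a2-a1)*(a2-a3)) < 0 :=
    mul_neg_of_pos_of_neg (by linarith) (mul_neg_of_pos_of_neg (by linarith) (by linarith))
  have hq3 : 0 < (a3-a0)*((a3-a1)*(a3-a2)) :=
    mul_pos (by linarith) (mul_pos (by linarith) (by linarith))
  have h0 : c*a0^3+b*a0^2+e*a0+d ≤ 0 := by
    rw [hv0]; exact mul_nonpos_of_nonneg_of_nonpos hWn hq0.le
  have h1 : 0 ≤ c*a1^3+b*a1^2+e*a1+d := by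
    rw [hv1]; exact mul_nonneg hXn hq1.le
  have h2 : c*a2^3+b*a2^2+e*a2+d ≤ 0 := by
    rw [hv2]; exact mul_nonpos_of_nonneg_of_nonpos hYn hq2.le
  have h3 : 0 ≤ c*a3^3+b*a3^2+e*a3+d := by
    rw [hv3]; exact mul_nonneg hZn hq3.le
  obtain ⟨t1, t2, t3, c01, c11, c12, c22, c23, c33, hfact⟩ :=
    cubic_factor c b e d a0 a1 a2 a3 hc h01 h12 h23 h0 h1 h2 h3
  refine ⟨t1, t2, t3, ⟨c01, c11, c12, c22, c23, c33⟩, ?_, ?_, ?_⟩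
  · exact hc.ne'
  · intro s
    have h := hfact s
    rw [hcdef, hb, he, hd] at h
    rw [hcdef]
    linear_combination h
  · intro hx hy hz hr
    have hWp : 0 < W := by
      rw [hW]
      have : (0:ℝ) < x ^ 2 + y ^ 2 + z ^ 2 - 1 := by linarith
      positivity
    have hXp : 0 < X := by rw [hX]; positivity
    have hYp : 0 < Y := by rw [hY]; positivity
    have hZp : 0 < Z := by rw [hZ]; positivity
    have s0 : c*a0^3+b*a0^2+e*a0+d < 0 := by rw [hv0]; exact mul_neg_of_pos_of_neg hWp hq0
    have s1 : 0 < c*a1^3+b*a1^2+e*a1+d := by rw [hv1]; exact mul_pos hXp hq1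
    have s2 : c*a2^3+b*a2^2+e*a2+d < 0 := by rw [hv2]; exact mul_neg_of_pos_of_neg hYp hq2
    have s3 : 0 < c*a3^3+b*a3^2+e*a3+d := by rw [hv3]; exact mul_pos hZp hq3
    have hne : ∀ u : ℝ, (u = t1 ∨ u = t2 ∨ u = t3) → c*u^3+b*u^2+e*u+d = 0 := by
      intro u hu
      rcases hu with h | h | h <;> (rw [hfact u, h]; ring)
    refine ⟨lt_of_le_of_ne c01 ?_, lt_of_le_of_ne c11 ?_, lt_of_le_of_ne c12 ?_,
      lt_of_le_of_ne c22 ?_, lt_of_le_of_ne c23 ?_, lt_of_le_of_ne c33 ?_⟩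
    · intro h; have := hne a0 (Or.inl h); linarith
    · intro h; have := hne a1 (Or.inl h.symm); linarith
    · intro h; have := hne a1 (Or.inr (Or.inl h)); linarith
    · intro h; have := hne a2 (Or.inr (Or.inl h.symm)); linarith
    · intro h; have := hne a2 (Or.inr (Or.inr h)); linarith
    · intro h; have := hne a3 (Or.inr (Or.inr h.symm)); linarith
end

section
/- Let u : [a,b] → ℝ be a continuously differentiable function, and let a ≤ c < d ≤ b. Then, for all t ∈ [a,b], (d − c)·|u(t)|² ≤ 2·∫_c^d |u(r)|² dr + 2(b − a)(d − c)·∫_a^b |u'(r)|² dr. -/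
open intervalIntegral MeasureTheory

/-- Cauchy–Schwarz for interval integrals of continuous functions. -/
lemma cs_aux {α β : ℝ} (hαβ : α ≤ β) {f : ℝ → ℝ} (hf : ContinuousOn f (Set.Icc α β)) :
    (∫ r in α..β, f r) ^ 2 ≤ (β - α) * ∫ r in α..β, (f r) ^ 2 := by
  set L := β - α with hL
  set A := ∫ r in α..β, f r with hA
  have hfi : IntervalIntegrable f volume α β :=
    ContinuousOn.intervalIntegrable (by rw [Set.uIcc_of_le hαβ]; exact hf)
  have hf2i : IntervalIntegrable (fun r => (f r) ^ 2) volume α β :=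
    ContinuousOn.intervalIntegrable (by rw [Set.uIcc_of_le hαβ]; exact hf.pow 2)
  have h0 : 0 ≤ ∫ r in α..β, (L * f r - A) ^ 2 :=
    intervalIntegral.integral_nonneg hαβ (fun x _ => sq_nonneg _)
  have hexp : (∫ r in α..β, (L * f r - A) ^ 2)
      = L ^ 2 * (∫ r in α..β, (f r) ^ 2) - 2 * L * A * A + A ^ 2 * L := by
    have : (fun r => (L * f r - A) ^ 2)
        = fun r => L ^ 2 * (f r) ^ 2 - (2 * L * A) * f r + A ^ 2 := by
      funext r; ring
    rw [this]
    rw [intervalIntegral.integral_add (((hf2i.const_mul _).sub (hfi.const_mul _)))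
      intervalIntegrable_const,
      intervalIntegral.integral_sub (hf2i.const_mul _) (hfi.const_mul _),
      intervalIntegral.integral_const_mul, intervalIntegral.integral_const_mul,
      intervalIntegral.integral_const]
    simp [hA, hL]
    ring
  rw [hexp] at h0
  rcases eq_or_lt_of_le hαβ with h | h
  · subst h; simp [hA]
  · have hLpos : 0 < L := by simp [hL]; linarith
    nlinarith [h0, sq_nonneg A]

/-- **Lemma 5.1 of the paper.** If `u` is continuously differentiable on `[a,b]` and
`a ≤ c < d ≤ b`, then for all `t ∈ [a,b]`,
`(d−c)|u(t)|² ≤ 2 ∫_c^d |u|² + 2(b−a)(d−c) ∫_a^b |u'|²`. -/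
theorem stmt_6 (a b c d : ℝ) (hac : a ≤ c) (hcd : c < d) (hdb : d ≤ b)
    (u u' : ℝ → ℝ)
    (hu : ∀ t ∈ Set.Icc a b, HasDerivAt u (u' t) t)
    (hu' : ContinuousOn u' (Set.Icc a b)) :
    ∀ t ∈ Set.Icc a b,
      (d - c) * |u t| ^ 2 ≤
        2 * (∫ r in c..d, |u r| ^ 2) +
          2 * (b - a) * (d - c) * (∫ r in a..b, |u' r| ^ 2) := by
  intro t ht
  have hab : a ≤ b := le_trans hac (le_trans hcd.le hdb)
  have hucont : ContinuousOn u (Set.Icc a b) := fun x hx =>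
    (hu x hx).continuousAt.continuousWithinAt
  -- abbreviation
  set K := ∫ r in a..b, |u' r| ^ 2 with hK
  have hKeq : K = ∫ r in a..b, (u' r) ^ 2 := by
    apply intervalIntegral.integral_congr
    intro x _; exact sq_abs _
  have hu'2i : IntervalIntegrable (fun r => (u' r) ^ 2) volume a b :=
    ContinuousOn.intervalIntegrable (by rw [Set.uIcc_of_le hab]; exact hu'.pow 2)
  -- pointwise bound: for s ∈ [a,b], (∫_s^t u')² ≤ (b-a) * K
  have key : ∀ s ∈ Set.Icc a b, (u t - u s) ^ 2 ≤ (b - a) * K := by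
    intro s hs
    have hsub : Set.uIcc s t ⊆ Set.Icc a b := by
      rw [← Set.uIcc_of_le hab]
      exact Set.uIcc_subset_uIcc (by rw [Set.uIcc_of_le hab]; exact hs)
        (by rw [Set.uIcc_of_le hab]; exact ht)
    have hftc : ∫ r in s..t, u' r = u t - u s := by
      apply intervalIntegral.integral_eq_sub_of_hasDerivAt
      · intro x hx; exact hu x (hsub hx)
      · exact (hu'.mono hsub).intervalIntegrable
    have hmono : ∀ α β : ℝ, a ≤ α → α ≤ β → β ≤ b →
        ∫ r in α..β, (u' r) ^ 2 ≤ ∫ r in a..b, (u' r) ^ 2 := by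
      intro α β h1 h2 h3
      exact intervalIntegral.integral_mono_interval h1 h2 h3
        (Filter.Eventually.of_forall fun x => sq_nonneg _) hu'2i
    rw [← hftc, hKeq]
    rcases le_total s t with hst | hst
    · calc (∫ r in s..t, u' r) ^ 2 ≤ (t - s) * ∫ r in s..t, (u' r) ^ 2 :=
            cs_aux hst (hu'.mono (by rwa [← Set.uIcc_of_le hst]))
        _ ≤ (b - a) * ∫ r in a..b, (u' r) ^ 2 := by
            apply mul_le_mul (by linarith [hs.1, ht.2]) (hmono s t hs.1 hst ht.2)
              (intervalIntegral.integral_nonneg hst fun x _ => sq_nonneg _) (by linarith)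
    · have : (∫ r in s..t, u' r) ^ 2 = (∫ r in t..s, u' r) ^ 2 := by
        rw [intervalIntegral.integral_symm]; ring
      rw [this]
      calc (∫ r in t..s, u' r) ^ 2 ≤ (s - t) * ∫ r in t..s, (u' r) ^ 2 :=
            cs_aux hst (hu'.mono (by rwa [← Set.uIcc_of_le hst, Set.uIcc_comm]))
        _ ≤ (b - a) * ∫ r in a..b, (u' r) ^ 2 := by
            apply mul_le_mul (by linarith [ht.1, hs.2]) (hmono t s ht.1 hst hs.2)
              (intervalIntegral.integral_nonneg hst fun x _ => sq_nonneg _) (by linarith)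
  -- pointwise: |u t|² ≤ 2|u s|² + 2(b-a)K for s ∈ [c,d]
  have hcdsub : Set.Icc c d ⊆ Set.Icc a b := Set.Icc_subset_Icc hac hdb
  have hpt : ∀ s ∈ Set.Icc c d, |u t| ^ 2 ≤ 2 * |u s| ^ 2 + 2 * ((b - a) * K) := by
    intro s hs
    have h1 := key s (hcdsub hs)
    have h2 : |u t| ^ 2 = (u t) ^ 2 := sq_abs _
    have h3 : |u s| ^ 2 = (u s) ^ 2 := sq_abs _
    rw [h2, h3]
    nlinarith [h1, sq_nonneg (u t - 2 * u s)]
  -- integrate over s ∈ [c,d]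
  have hcont2 : ContinuousOn (fun s => |u s| ^ 2) (Set.uIcc c d) := by
    rw [Set.uIcc_of_le hcd.le]; exact ((hucont.mono hcdsub).abs).pow 2
  have hu2i : IntervalIntegrable (fun s => |u s| ^ 2) volume c d :=
    hcont2.intervalIntegrable
  have hint : ∫ s in c..d, |u t| ^ 2 ≤ ∫ s in c..d, (2 * |u s| ^ 2 + 2 * ((b - a) * K)) := by
    apply intervalIntegral.integral_mono_on hcd.le intervalIntegrable_const
      ((hu2i.const_mul 2).add intervalIntegrable_const)
    intro s hs; exact hpt s hs
  rw [intervalIntegral.integral_const, smul_eq_mul] at hint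
  rw [intervalIntegral.integral_add (hu2i.const_mul 2) intervalIntegrable_const,
    intervalIntegral.integral_const_mul, intervalIntegral.integral_const, smul_eq_mul] at hint
  linarith [hint]
end

section
/- Let q : [a,b] → ℝ be continuous and let u : [a,b] → ℝ be the solution of u''(t) = q(t)·u(t) with initial conditions u(a) = 1, u'(a) = 0. Suppose q(t) ≥ 0 for all t ∈ [a,b] and q(t) ≥ λ² for all t ∈ [c,b], where λ > 0 and c ∈ [a,b). Then u(t) > 0 for all t ∈ [a,b], and u(b)/u(t) ≥ (1/2)·e^{λ(b − c)} for all t ∈ [a,c]. -/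
/-- Monotonicity on an interval from a pointwise derivative. -/
lemma mono_aux {f f' : ℝ → ℝ} {x y : ℝ}
    (hf : ∀ t ∈ Set.Icc x y, HasDerivAt f (f' t) t)
    (h0 : ∀ t ∈ Set.Ioo x y, 0 ≤ f' t) : MonotoneOn f (Set.Icc x y) := by
  apply monotoneOn_of_deriv_nonneg (convex_Icc x y)
  · exact fun t ht => (hf t ht).continuousAt.continuousWithinAt
  · rw [interior_Icc]
    exact fun t ht =>
      ((hf t (Set.Ioo_subset_Icc_self ht)).differentiableAt).differentiableWithinAt
  · rw [interior_Icc]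
    intro t ht
    rw [(hf t (Set.Ioo_subset_Icc_self ht)).deriv]
    exact h0 t ht

/-- **Lemma 5.2 of the paper.** Let `u` solve `u'' = q u` on `[a,b]` with `u(a) = 1`,
`u'(a) = 0`, where `q` is continuous, `q ≥ 0` on `[a,b]` and `q ≥ λ²` on `[c,b]`
for some `λ > 0` and `c ∈ [a,b)`. Then `u > 0` on `[a,b]` and
`u(b)/u(t) ≥ ½ e^{λ(b−c)}` for all `t ∈ [a,c]`. -/
theorem stmt_7 (a b c lam : ℝ) (hac : a ≤ c) (hcb : c < b) (hlam : 0 < lam)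
    (q u u' : ℝ → ℝ) (hq : ContinuousOn q (Set.Icc a b))
    (hu : ∀ t ∈ Set.Icc a b, HasDerivAt u (u' t) t ∧ HasDerivAt u' (q t * u t) t)
    (hua : u a = 1) (hu'a : u' a = 0)
    (hq0 : ∀ t ∈ Set.Icc a b, 0 ≤ q t)
    (hqc : ∀ t ∈ Set.Icc c b, lam ^ 2 ≤ q t) :
    (∀ t ∈ Set.Icc a b, 0 < u t) ∧
      ∀ t ∈ Set.Icc a c, u b / u t ≥ 1 / 2 * Real.exp (lam * (b - c)) := by
  have hab : a ≤ b := hac.trans hcb.le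
  have hcont_u : ContinuousOn u (Set.Icc a b) :=
    fun t ht => ((hu t ht).1.differentiableAt.continuousAt).continuousWithinAt
  -- Part 1: positivity of u
  have hpos : ∀ t ∈ Set.Icc a b, 0 < u t := by
    by_contra hcon
    push_neg at hcon
    obtain ⟨T0, hT0, hT0u⟩ := hcon
    set S := Set.Icc a b ∩ u ⁻¹' Set.Iic 0 with hSdef
    have hSne : S.Nonempty := ⟨T0, hT0, hT0u⟩
    have hSbdd : BddBelow S := ⟨a, fun t ht => ht.1.1⟩
    have hScl : IsClosed S :=
      hcont_u.preimage_isClosed_of_isClosed isClosed_Icc isClosed_Iic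
    set T := sInf S with hT
    have hTS : T ∈ S := hScl.csInf_mem hSne hSbdd
    have hTab : T ∈ Set.Icc a b := hTS.1
    have hTle : u T ≤ 0 := hTS.2
    have hsub : Set.Icc a T ⊆ Set.Icc a b := Set.Icc_subset_Icc le_rfl hTab.2
    -- u > 0 on [a, T)
    have hposT : ∀ s ∈ Set.Ico a T, 0 < u s := by
      intro s hs
      by_contra hsn
      push_neg at hsn
      have : s ∈ S := ⟨⟨hs.1, hs.2.le.trans hTab.2⟩, hsn⟩
      exact absurd (csInf_le hSbdd this) (not_le.mpr hs.2)
    -- u' is monotone on [a, T]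
    have hmu' : MonotoneOn u' (Set.Icc a T) := by
      apply mono_aux (fun t ht => (hu t (hsub ht)).2)
      intro t ht
      exact mul_nonneg (hq0 t (hsub (Set.Ioo_subset_Icc_self ht)))
        (hposT t ⟨ht.1.le, ht.2⟩).le
    have hu'nn : ∀ s ∈ Set.Icc a T, 0 ≤ u' s := by
      intro s hs
      have := hmu' (Set.left_mem_Icc.mpr hTab.1) hs hs.1
      rwa [hu'a] at this
    have hmu : MonotoneOn u (Set.Icc a T) := by
      apply mono_aux (fun t ht => (hu t (hsub ht)).1)
      exact fun t ht => hu'nn t (Set.Ioo_subset_Icc_self ht)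
    have : (1 : ℝ) ≤ u T := by
      have := hmu (Set.left_mem_Icc.mpr hTab.1) (Set.right_mem_Icc.mpr hTab.1) hTab.1
      rwa [hua] at this
    linarith
  -- global monotonicity
  have hmu' : MonotoneOn u' (Set.Icc a b) := by
    apply mono_aux (fun t ht => (hu t ht).2)
    intro t ht
    exact mul_nonneg (hq0 t (Set.Ioo_subset_Icc_self ht))
      (hpos t (Set.Ioo_subset_Icc_self ht)).le
  have hu'nn : ∀ s ∈ Set.Icc a b, 0 ≤ u' s := by
    intro s hs
    have := hmu' (Set.left_mem_Icc.mpr hab) hs hs.1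
    rwa [hu'a] at this
  have hmu : MonotoneOn u (Set.Icc a b) := by
    apply mono_aux (fun t ht => (hu t ht).1)
    exact fun t ht => hu'nn t (Set.Ioo_subset_Icc_self ht)
  refine ⟨hpos, ?_⟩
  -- Part 2
  have hcab : c ∈ Set.Icc a b := ⟨hac, hcb.le⟩
  have hsub2 : Set.Icc c b ⊆ Set.Icc a b := Set.Icc_subset_Icc hac le_rfl
  have hA0 : 0 < u c := hpos c hcab
  set A := u c with hA
  set w : ℝ → ℝ := fun t => u t - A * Real.cosh (lam * (t - c)) with hw
  set w1 : ℝ → ℝ := fun t => u' t - A * (Real.sinh (lam * (t - c)) * lam) with hw1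
  set w2 : ℝ → ℝ := fun t => q t * u t - A * (Real.cosh (lam * (t - c)) * lam * lam)
    with hw2
  set h : ℝ → ℝ := fun t => w1 t - lam * w t with hh
  set g : ℝ → ℝ := fun t => Real.exp (lam * t) * h t with hg
  have hlin : ∀ t : ℝ, HasDerivAt (fun s : ℝ => lam * (s - c)) lam t := by
    intro t
    simpa using ((hasDerivAt_id t).sub_const c).const_mul lam
  have Hw : ∀ t ∈ Set.Icc c b, HasDerivAt w (w1 t) t := fun t ht =>
    (hu t (hsub2 ht)).1.sub (((hlin t).cosh).const_mul A)
  have Hw1 : ∀ t ∈ Set.Icc c b, HasDerivAt w1 (w2 t) t := fun t ht =>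
    (hu t (hsub2 ht)).2.sub ((((hlin t).sinh).mul_const lam).const_mul A)
  have Hh : ∀ t ∈ Set.Icc c b, HasDerivAt h (w2 t - lam * w1 t) t := fun t ht =>
    (Hw1 t ht).sub ((Hw t ht).const_mul lam)
  have Hg : ∀ t ∈ Set.Icc c b,
      HasDerivAt g (Real.exp (lam * t) * ((q t - lam ^ 2) * u t)) t := by
    intro t ht
    have H := (((hasDerivAt_id t).const_mul lam).exp).mul (Hh t ht)
    refine H.congr_deriv ?_
    simp only [hh, hw, hw1, hw2, id_eq]
    ring
  have hgmono : MonotoneOn g (Set.Icc c b) := by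
    apply mono_aux Hg
    intro t ht
    have ht' := Set.Ioo_subset_Icc_self ht
    have h1 : 0 ≤ q t - lam ^ 2 := sub_nonneg.mpr (hqc t ht')
    have h2 : 0 ≤ u t := (hpos t (hsub2 ht')).le
    positivity
  have hgc : g c = Real.exp (lam * c) * u' c := by
    simp [hg, hh, hw, hw1, hA]
  have hhnn : ∀ t ∈ Set.Icc c b, 0 ≤ h t := by
    intro t ht
    have h1 : g c ≤ g t := hgmono (Set.left_mem_Icc.mpr hcb.le) ht ht.1
    have h2 : 0 ≤ g c := by
      rw [hgc]; exact mul_nonneg (Real.exp_pos _).le (hu'nn c hcab)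
    have h3 : 0 ≤ g t := h2.trans h1
    rw [hg] at h3
    exact nonneg_of_mul_nonneg_right h3 (Real.exp_pos _)
  -- k = exp(-(lam t)) * w
  set k : ℝ → ℝ := fun t => Real.exp (-(lam * t)) * w t with hk
  have Hk : ∀ t ∈ Set.Icc c b, HasDerivAt k (Real.exp (-(lam * t)) * h t) t := by
    intro t ht
    have H := ((((hasDerivAt_id t).const_mul lam).neg).exp).mul (Hw t ht)
    refine H.congr_deriv ?_
    simp only [hh, hw, hw1, id_eq, Pi.neg_apply]
    ring
  have hkmono : MonotoneOn k (Set.Icc c b) := by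
    apply mono_aux Hk
    intro t ht
    exact mul_nonneg (Real.exp_pos _).le (hhnn t (Set.Ioo_subset_Icc_self ht))
  have hkc : k c = 0 := by simp [hk, hw, hA]
  have hwb : 0 ≤ w b := by
    have h1 : k c ≤ k b := hkmono (Set.left_mem_Icc.mpr hcb.le)
      (Set.right_mem_Icc.mpr hcb.le) hcb.le
    rw [hkc, hk] at h1
    exact nonneg_of_mul_nonneg_right h1 (Real.exp_pos _)
  have hub : A * Real.cosh (lam * (b - c)) ≤ u b := by
    simp only [hw] at hwb; linarith
  have hcosh : Real.exp (lam * (b - c)) / 2 ≤ Real.cosh (lam * (b - c)) := by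
    rw [Real.cosh_eq]
    have := (Real.exp_pos (-(lam * (b - c)))).le
    linarith
  intro t ht
  have htab : t ∈ Set.Icc a b := ⟨ht.1, ht.2.trans hcb.le⟩
  have hut : 0 < u t := hpos t htab
  have hutA : u t ≤ A := hmu htab hcab ht.2
  rw [ge_iff_le, le_div_iff₀ hut]
  calc 1 / 2 * Real.exp (lam * (b - c)) * u t
      ≤ 1 / 2 * Real.exp (lam * (b - c)) * A := by
        apply mul_le_mul_of_nonneg_left hutA
        positivity
    _ ≤ A * Real.cosh (lam * (b - c)) := by
        have := mul_le_mul_of_nonneg_left hcosh hA0.le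
        linarith
    _ ≤ u b := hub
end

section
/- Let q : [a,b] → ℝ be continuous and suppose the differential equation u''(t) + q(t)·u(t) = 0 admits a nontrivial solution u on [a,b] satisfying u'(a) = u'(b) = 0 and having exactly m zeros in the open interval (a,b), where m ∈ ℕ₀. Then there exists t ∈ (a,b) such that q(t) = π² m² / (b − a)². -/
open Set Real Filter Topology



lemma aux_sign_const {f : ℝ → ℝ} {s : Set ℝ} (hs : s.OrdConnected)
    (hc : ContinuousOn f s) (h0 : ∀ t ∈ s, f t ≠ 0) :
    (∀ t ∈ s, 0 < f t) ∨ (∀ t ∈ s, f t < 0) := by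
  by_cases hp : ∀ t ∈ s, 0 < f t
  · exact .inl hp
  push_neg at hp
  obtain ⟨x, hx, hfx⟩ := hp
  have hfx : f x < 0 := lt_of_le_of_ne hfx (h0 x hx)
  refine .inr fun y hy => ?_
  by_contra hy'
  push_neg at hy'
  have hfy : 0 < f y := lt_of_le_of_ne hy' (Ne.symm (h0 y hy))
  rcases le_total x y with hxy | hxy
  · have hsub : Icc x y ⊆ s := hs.out hx hy
    obtain ⟨z, hz, hz0⟩ := intermediate_value_Icc hxy (hc.mono hsub) ⟨hfx.le, hfy.le⟩
    exact h0 z (hsub hz) hz0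
  · have hsub : Icc y x ⊆ s := hs.out hy hx
    obtain ⟨z, hz, hz0⟩ := intermediate_value_Icc' hxy (hc.mono hsub) ⟨hfx.le, hfy.le⟩
    exact h0 z (hsub hz) hz0

lemma aux_nonneg_left {f : ℝ → ℝ} {c d : ℝ} (hcd : c < d)
    (hf : ContinuousAt f c) (h : ∀ t ∈ Ioo c d, 0 < f t) : 0 ≤ f c := by
  by_contra h'
  push_neg at h'
  obtain ⟨t, ht, ht'⟩ := Filter.nonempty_of_mem
    (Filter.inter_mem (Ioo_mem_nhdsGT hcd)
      (nhdsWithin_le_nhds (hf (Iio_mem_nhds h'))))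
  exact lt_asymm (h t ht) ht'

lemma aux_nonneg_right {f : ℝ → ℝ} {c d : ℝ} (hcd : c < d)
    (hf : ContinuousAt f d) (h : ∀ t ∈ Ioo c d, 0 < f t) : 0 ≤ f d := by
  by_contra h'
  push_neg at h'
  obtain ⟨t, ht, ht'⟩ := Filter.nonempty_of_mem
    (Filter.inter_mem (Ioo_mem_nhdsLT hcd)
      (nhdsWithin_le_nhds (hf (Iio_mem_nhds h'))))
  exact lt_asymm (h t ht) ht'

lemma aux_deriv_nonpos {f : ℝ → ℝ} {f' c d : ℝ} (hcd : c < d)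
    (hf : HasDerivAt f f' d) (hfd : f d = 0) (hpos : ∀ t ∈ Ioo c d, 0 < f t) :
    f' ≤ 0 := by
  have h1 : HasDerivWithinAt f f' (Iio d) d := hf.hasDerivWithinAt
  rw [hasDerivWithinAt_iff_tendsto_slope] at h1
  have hIio : Iio d \ {d} = Iio d := Set.diff_singleton_eq_self (by simp)
  rw [hIio] at h1
  refine le_of_tendsto h1 ?_
  filter_upwards [Ioo_mem_nhdsLT hcd] with t ht
  have hslope : slope f d t = f t / (t - d) := by
    rw [slope_def_field, hfd]; ring_nf
  rw [hslope]
  exact div_nonpos_of_nonneg_of_nonpos (hpos t ht).le (by linarith [ht.2])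

lemma aux_deriv_nonneg {f : ℝ → ℝ} {f' c d : ℝ} (hcd : c < d)
    (hf : HasDerivAt f f' c) (hfc : f c = 0) (hpos : ∀ t ∈ Ioo c d, 0 < f t) :
    0 ≤ f' := by
  have h1 : HasDerivWithinAt f f' (Ioi c) c := hf.hasDerivWithinAt
  rw [hasDerivWithinAt_iff_tendsto_slope] at h1
  have hIoi : Ioi c \ {c} = Ioi c := Set.diff_singleton_eq_self (by simp)
  rw [hIoi] at h1
  refine ge_of_tendsto h1 ?_
  filter_upwards [Ioo_mem_nhdsGT hcd] with t ht
  have hslope : slope f c t = f t / (t - c) := by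
    rw [slope_def_field, hfc]; ring_nf
  rw [hslope]
  exact div_nonneg (hpos t ht).le (by linarith [ht.1])







lemma aux_sturm {c d : ℝ} (hcd : c < d) {f f' g g' F G : ℝ → ℝ}
    (hf : ∀ t ∈ Icc c d, HasDerivAt f (f' t) t ∧ HasDerivAt f' (-(F t) * f t) t)
    (hg : ∀ t ∈ Icc c d, HasDerivAt g (g' t) t ∧ HasDerivAt g' (-(G t) * g t) t)
    (hFG : ∀ t ∈ Ioo c d, G t < F t)
    (hfpos : ∀ t ∈ Ioo c d, 0 < f t) (hgpos : ∀ t ∈ Ioo c d, 0 < g t)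
    (hWc : f' c * g c - f c * g' c ≤ 0)
    (hWd : 0 ≤ f' d * g d - f d * g' d) : False := by
  set W : ℝ → ℝ := fun t => f' t * g t - f t * g' t with hWdef
  have hDW : ∀ t ∈ Icc c d, HasDerivAt W ((G t - F t) * (f t * g t)) t := by
    intro t ht
    have h1 := ((hf t ht).2.mul (hg t ht).1).sub ((hf t ht).1.mul (hg t ht).2)
    exact h1.congr_deriv (by ring)
  have hcont : ContinuousOn W (Icc c d) := fun t ht =>
    (hDW t ht).continuousAt.continuousWithinAt
  have hanti : StrictAntiOn W (Icc c d) := by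
    apply strictAntiOn_of_deriv_neg (convex_Icc c d) hcont
    intro t ht
    rw [interior_Icc] at ht
    rw [(hDW t (Ioo_subset_Icc_self ht)).deriv]
    have h2 := mul_pos (hfpos t ht) (hgpos t ht)
    have h3 := hFG t ht
    nlinarith
  have h4 := hanti (left_mem_Icc.2 hcd.le) (right_mem_Icc.2 hcd.le) hcd
  have h5 : W c = f' c * g c - f c * g' c := rfl
  have h6 : W d = f' d * g d - f d * g' d := rfl
  rw [h5, h6] at h4
  linarith

lemma aux_step' {c d : ℝ} (hcd : c < d) {f f' g g' F G : ℝ → ℝ}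
    (hf : ∀ t ∈ Icc c d, HasDerivAt f (f' t) t ∧ HasDerivAt f' (-(F t) * f t) t)
    (hg : ∀ t ∈ Icc c d, HasDerivAt g (g' t) t ∧ HasDerivAt g' (-(G t) * g t) t)
    (hFG : ∀ t ∈ Ioo c d, G t < F t)
    (hfpos : ∀ t ∈ Ioo c d, 0 < f t) (hgpos : ∀ t ∈ Ioo c d, 0 < g t)
    (hbc : (f' c = 0 ∧ g' c = 0) ∨ g c = 0)
    (hbd : (f' d = 0 ∧ g' d = 0) ∨ g d = 0) : False := by
  have hcmem : c ∈ Icc c d := left_mem_Icc.2 hcd.le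
  have hdmem : d ∈ Icc c d := right_mem_Icc.2 hcd.le
  have hWc : f' c * g c - f c * g' c ≤ 0 := by
    rcases hbc with ⟨h1, h2⟩ | h1
    · simp [h1, h2]
    · have hfc : 0 ≤ f c := aux_nonneg_left hcd (hf c hcmem).1.continuousAt hfpos
      have hgc : 0 ≤ g' c := aux_deriv_nonneg hcd (hg c hcmem).1 h1 hgpos
      rw [h1]
      nlinarith [mul_nonneg hfc hgc]
  have hWd : 0 ≤ f' d * g d - f d * g' d := by
    rcases hbd with ⟨h1, h2⟩ | h1
    · simp [h1, h2]
    · have hfd : 0 ≤ f d := aux_nonneg_right hcd (hf d hdmem).1.continuousAt hfpos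
      have hgd : g' d ≤ 0 := aux_deriv_nonpos hcd (hg d hdmem).1 h1 hgpos
      rw [h1]
      nlinarith [mul_nonneg hfd (neg_nonneg.2 hgd)]
  exact aux_sturm hcd hf hg hFG hfpos hgpos hWc hWd

lemma aux_neg {c d : ℝ} {f f' F : ℝ → ℝ}
    (hf : ∀ t ∈ Icc c d, HasDerivAt f (f' t) t ∧ HasDerivAt f' (-(F t) * f t) t) :
    ∀ t ∈ Icc c d, HasDerivAt (fun s => -f s) (-f' t) t ∧
      HasDerivAt (fun s => -f' s) (-(F t) * (-f t)) t := by
  intro t ht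
  refine ⟨(hf t ht).1.neg, ?_⟩
  have h1 := (hf t ht).2.neg
  exact h1.congr_deriv (by ring)

lemma aux_step {c d : ℝ} (hcd : c < d) {f f' g g' F G : ℝ → ℝ}
    (hf : ∀ t ∈ Icc c d, HasDerivAt f (f' t) t ∧ HasDerivAt f' (-(F t) * f t) t)
    (hg : ∀ t ∈ Icc c d, HasDerivAt g (g' t) t ∧ HasDerivAt g' (-(G t) * g t) t)
    (hFG : ∀ t ∈ Ioo c d, G t < F t)
    (hfne : ∀ t ∈ Ioo c d, f t ≠ 0) (hgne : ∀ t ∈ Ioo c d, g t ≠ 0)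
    (hbc : (f' c = 0 ∧ g' c = 0) ∨ g c = 0)
    (hbd : (f' d = 0 ∧ g' d = 0) ∨ g d = 0) : False := by
  have hfcont : ContinuousOn f (Ioo c d) := fun t ht =>
    (hf t (Ioo_subset_Icc_self ht)).1.continuousAt.continuousWithinAt
  have hgcont : ContinuousOn g (Ioo c d) := fun t ht =>
    (hg t (Ioo_subset_Icc_self ht)).1.continuousAt.continuousWithinAt
  rcases aux_sign_const Set.ordConnected_Ioo hfcont hfne with hfpos | hfneg <;>
    rcases aux_sign_const Set.ordConnected_Ioo hgcont hgne with hgpos | hgneg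
  · exact aux_step' hcd hf hg hFG hfpos hgpos hbc hbd
  · refine aux_step' hcd hf (aux_neg hg) hFG hfpos
      (fun t ht => neg_pos.2 (hgneg t ht)) ?_ ?_
    · rcases hbc with ⟨h1, h2⟩ | h1
      · exact .inl ⟨h1, by simp [h2]⟩
      · exact .inr (by simp [h1])
    · rcases hbd with ⟨h1, h2⟩ | h1
      · exact .inl ⟨h1, by simp [h2]⟩
      · exact .inr (by simp [h1])
  · refine aux_step' hcd (aux_neg hf) hg hFG
      (fun t ht => neg_pos.2 (hfneg t ht)) hgpos ?_ ?_
    · rcases hbc with ⟨h1, h2⟩ | h1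
      · exact .inl ⟨by simp [h1], h2⟩
      · exact .inr h1
    · rcases hbd with ⟨h1, h2⟩ | h1
      · exact .inl ⟨by simp [h1], h2⟩
      · exact .inr h1
  · refine aux_step' hcd (aux_neg hf) (aux_neg hg) hFG
      (fun t ht => neg_pos.2 (hfneg t ht)) (fun t ht => neg_pos.2 (hgneg t ht)) ?_ ?_
    · rcases hbc with ⟨h1, h2⟩ | h1
      · exact .inl ⟨by simp [h1], by simp [h2]⟩
      · exact .inr (by simp [h1])
    · rcases hbd with ⟨h1, h2⟩ | h1
      · exact .inl ⟨by simp [h1], by simp [h2]⟩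
      · exact .inr (by simp [h1])


lemma aux_cos_deriv (ω c : ℝ) (t : ℝ) :
    HasDerivAt (fun s => Real.cos (ω * (s - c))) (-(ω * Real.sin (ω * (t - c)))) t ∧
    HasDerivAt (fun s => -(ω * Real.sin (ω * (s - c)))) (-(ω ^ 2) * Real.cos (ω * (t - c))) t := by
  have hlin : ∀ s : ℝ, HasDerivAt (fun s' => ω * (s' - c)) ω s := fun s => by
    simpa using ((hasDerivAt_id s).sub_const c).const_mul ω
  constructor
  · have h1 := (Real.hasDerivAt_cos (ω * (t - c))).comp t (hlin t)
    exact h1.congr_deriv (by ring)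
  · have h1 := (((Real.hasDerivAt_sin (ω * (t - c))).comp t (hlin t)).const_mul ω).neg
    exact h1.congr_deriv (by ring)

lemma aux_sin_deriv (ω c : ℝ) (t : ℝ) :
    HasDerivAt (fun s => Real.sin (ω * (s - c))) (ω * Real.cos (ω * (t - c))) t ∧
    HasDerivAt (fun s => ω * Real.cos (ω * (s - c))) (-(ω ^ 2) * Real.sin (ω * (t - c))) t := by
  have hlin : ∀ s : ℝ, HasDerivAt (fun s' => ω * (s' - c)) ω s := fun s => by
    simpa using ((hasDerivAt_id s).sub_const c).const_mul ω
  constructor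
  · have h1 := (Real.hasDerivAt_sin (ω * (t - c))).comp t (hlin t)
    exact h1.congr_deriv (by ring)
  · have h1 := ((Real.hasDerivAt_cos (ω * (t - c))).comp t (hlin t)).const_mul ω
    exact h1.congr_deriv (by ring)


/-- **Oscillation comparison fact** (from the proof of Theorem 5.2 of the paper).
If `u'' + q u = 0` with continuous `q` admits a nontrivial solution `u` with
`u'(a) = u'(b) = 0` having exactly `m` zeros in `(a,b)`, then there is `t ∈ (a,b)`
with `q(t) = π² m²/(b−a)²`. -/
theorem stmt_8 (a b : ℝ) (hab : a < b) (m : ℕ)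
    (q u u' : ℝ → ℝ) (hq : ContinuousOn q (Set.Icc a b))
    (hu : ∀ t ∈ Set.Icc a b, HasDerivAt u (u' t) t ∧ HasDerivAt u' (-(q t) * u t) t)
    (hnontriv : ∃ t ∈ Set.Icc a b, u t ≠ 0)
    (hu'a : u' a = 0) (hu'b : u' b = 0)
    (hzeros : {t ∈ Set.Ioo a b | u t = 0}.encard = (m : ℕ∞)) :
    ∃ t ∈ Set.Ioo a b, q t = Real.pi ^ 2 * (m : ℝ) ^ 2 / (b - a) ^ 2 := by
  by_contra hcon
  push_neg at hcon
  have hba : (0:ℝ) < b - a := sub_pos.2 hab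
  have hbane : b - a ≠ 0 := ne_of_gt hba
  have hπ := Real.pi_pos
  obtain ⟨ω, hωdef⟩ : ∃ ω : ℝ, ω = (m : ℝ) * Real.pi / (b - a) := ⟨_, rfl⟩
  have hlam : Real.pi ^ 2 * (m : ℝ) ^ 2 / (b - a) ^ 2 = ω ^ 2 := by
    rw [hωdef]; field_simp
  have hcon' : ∀ t ∈ Ioo a b, q t - ω ^ 2 ≠ 0 := by
    intro t ht h
    exact hcon t ht (by rw [hlam]; linarith)
  have hqc : ContinuousOn (fun t => q t - ω ^ 2) (Ioo a b) :=
    (hq.mono Ioo_subset_Icc_self).sub continuousOn_const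
  have hbaval : ω * (b - a) = (m : ℝ) * Real.pi := by
    rw [hωdef]; field_simp
  rcases aux_sign_const Set.ordConnected_Ioo hqc hcon' with hgt | hlt
  · -- Case A : ω² < q on (a,b)
    rcases Nat.eq_zero_or_pos m with hm0 | hmpos
    · -- m = 0
      subst hm0
      have hω0 : ω = 0 := by rw [hωdef]; simp
      have hZ : {t | t ∈ Ioo a b ∧ u t = 0} = ∅ := by
        rw [← Set.encard_eq_zero]; exact_mod_cast hzeros
      have hfne : ∀ t ∈ Ioo a b, u t ≠ 0 := by
        intro t ht h
        exact Set.notMem_empty t (by rw [← hZ]; exact ⟨ht, h⟩)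
      have hgne : ∀ t ∈ Ioo a b, Real.cos (ω * (t - a)) ≠ 0 := by
        intro t _; rw [hω0]; simp
      exact aux_step (F := q) (G := fun _ => ω ^ 2) hab
        (fun t ht => hu t ht) (fun t _ => aux_cos_deriv ω a t)
        (fun t ht => by simpa using (hgt t ht)) hfne hgne
        (.inl ⟨hu'a, by simp⟩) (.inl ⟨hu'b, by rw [hω0]; simp⟩)
    · -- m ≥ 1
      have hmR : (0:ℝ) < (m:ℝ) := Nat.cast_pos.2 hmpos
      have hmne : (m:ℝ) ≠ 0 := ne_of_gt hmR
      have hωpos : 0 < ω := by rw [hωdef]; exact div_pos (mul_pos hmR hπ) hba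
      obtain ⟨z, hzdef⟩ : ∃ z : ℕ → ℝ,
          ∀ k : ℕ, z k = a + (2 * k + 1) * (b - a) / (2 * m) := ⟨_, fun _ => rfl⟩
      have harg : ∀ j : ℕ, ω * (z j - a) = (2 * (j:ℝ) + 1) * Real.pi / 2 := by
        intro j
        rw [hzdef j, hωdef]
        field_simp
        ring
      have hza : ∀ k : ℕ, a < z k := by
        intro k
        have key : z k - a = (2 * (k:ℝ) + 1) * (b - a) / (2 * m) := by
          rw [hzdef k]; ring
        have h2 : 0 < (2 * (k:ℝ) + 1) * (b - a) / (2 * (m:ℝ)) := by positivity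
        linarith
      have hzlt : ∀ j k : ℕ, j < k → z j < z k := by
        intro j k hjk
        have hj : (j:ℝ) < (k:ℝ) := by exact_mod_cast hjk
        have key : z k - z j = ((k:ℝ) - j) * (b - a) / m := by
          rw [hzdef k, hzdef j]; field_simp; ring
        have h2 : 0 < ((k:ℝ) - j) * (b - a) / (m:ℝ) :=
          div_pos (mul_pos (by linarith) hba) hmR
        linarith
      have hzle : ∀ j k : ℕ, j ≤ k → z j ≤ z k := by
        intro j k hjk
        rcases eq_or_lt_of_le hjk with h | h
        · rw [h]
        · exact (hzlt j k h).le
      have hzb : ∀ k : ℕ, k < m → z k < b := by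
        intro k hk
        have hk' : (k:ℝ) + 1 ≤ (m:ℝ) := by exact_mod_cast hk
        have key : b - z k = (2 * (m:ℝ) - (2 * k + 1)) * (b - a) / (2 * m) := by
          rw [hzdef k]; field_simp; ring
        have h2 : 0 < (2 * (m:ℝ) - (2 * k + 1)) * (b - a) / (2 * (m:ℝ)) :=
          div_pos (mul_pos (by linarith) hba) (by positivity)
        linarith
      obtain ⟨L, hL0, hLk⟩ : ∃ L : ℕ → ℝ, L 0 = a ∧ ∀ k, k ≠ 0 → L k = z (k - 1) :=
        ⟨fun k => if k = 0 then a else z (k - 1), by simp, fun k hk => by simp [hk]⟩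
      obtain ⟨R, hRm, hRk⟩ : ∃ R : ℕ → ℝ, R m = b ∧ ∀ k, k ≠ m → R k = z k :=
        ⟨fun k => if k = m then b else z k, by simp, fun k hk => by simp [hk]⟩
      have hLa : ∀ k : ℕ, a ≤ L k := by
        intro k
        by_cases h : k = 0
        · rw [h, hL0]
        · rw [hLk k h]; exact (hza _).le
      have hRb : ∀ k : ℕ, k ≤ m → R k ≤ b := by
        intro k hk
        by_cases h : k = m
        · rw [h, hRm]
        · rw [hRk k h]; exact (hzb k (lt_of_le_of_ne hk h)).le
      have hclaim : ∀ k, k ≤ m → ∃ t, t ∈ Ioo (L k) (R k) ∧ u t = 0 := by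
        intro k hk
        by_contra hno
        push_neg at hno
        rcases Nat.eq_zero_or_pos k with hk0 | hkpos
        · -- k = 0 : interval (a, z 0), comparison cos(ω(·-a))
          subst hk0
          rw [hL0, hRk 0 (by omega)] at hno
          have hz0b : z 0 < b := hzb 0 hmpos
          have hcd : a < z 0 := hza 0
          have hval : ω * (z 0 - a) = Real.pi / 2 := by
            have h1 := harg 0; push_cast at h1; linarith
          have hsub : Icc a (z 0) ⊆ Icc a b := Icc_subset_Icc le_rfl hz0b.le
          have hsub' : Ioo a (z 0) ⊆ Ioo a b := Ioo_subset_Ioo le_rfl hz0b.le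
          have hgne : ∀ t ∈ Ioo a (z 0), Real.cos (ω * (t - a)) ≠ 0 := by
            intro t ht
            have h1 : 0 < ω * (t - a) := mul_pos hωpos (by linarith [ht.1])
            have h3 := mul_lt_mul_of_pos_left (sub_lt_sub_right ht.2 a) hωpos
            exact (Real.cos_pos_of_mem_Ioo ⟨by linarith, by linarith⟩).ne'
          refine aux_step (F := q) (G := fun _ => ω ^ 2) hcd
            (fun t ht => hu t (hsub ht)) (fun t _ => aux_cos_deriv ω a t)
            (fun t ht => by simpa using hgt t (hsub' ht)) hno hgne
            (.inl ⟨hu'a, by simp⟩) (.inr ?_)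
          show Real.cos (ω * (z 0 - a)) = 0
          rw [hval]; exact Real.cos_pi_div_two
        · -- k ≥ 1
          have hk1R : ((k - 1 : ℕ) : ℝ) = (k:ℝ) - 1 := by
            rw [Nat.cast_sub hkpos]; simp
          rcases eq_or_lt_of_le hk with hkm | hkm
          · -- k = m : interval (z (m-1), b), comparison sin(ω(·-z (m-1)))
            have hRkb : R k = b := by rw [hkm, hRm]
            rw [hLk k (by omega), hRkb] at hno
            have hcd : z (k - 1) < b := hzb (k - 1) (by omega)
            have hmk : (m:ℝ) = (k:ℝ) := by rw [hkm]
            have hval : ω * (b - z (k - 1)) = Real.pi / 2 := by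
              have h1 := harg (k - 1)
              rw [hk1R] at h1
              have h2 : ω * (b - z (k-1)) = ω * (b - a) - ω * (z (k-1) - a) := by ring
              rw [hbaval, h1] at h2
              rw [h2, hmk]; ring
            have hsub : Icc (z (k-1)) b ⊆ Icc a b := Icc_subset_Icc (hza _).le le_rfl
            have hsub' : Ioo (z (k-1)) b ⊆ Ioo a b := Ioo_subset_Ioo (hza _).le le_rfl
            have hgne : ∀ t ∈ Ioo (z (k-1)) b, Real.sin (ω * (t - z (k-1))) ≠ 0 := by
              intro t ht
              have h1 : 0 < ω * (t - z (k-1)) := mul_pos hωpos (by linarith [ht.1])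
              have h3 := mul_lt_mul_of_pos_left (sub_lt_sub_right ht.2 (z (k-1))) hωpos
              exact (Real.sin_pos_of_pos_of_lt_pi h1 (by linarith)).ne'
            refine aux_step (F := q) (G := fun _ => ω ^ 2) hcd
              (fun t ht => hu t (hsub ht)) (fun t _ => aux_sin_deriv ω (z (k-1)) t)
              (fun t ht => by simpa using hgt t (hsub' ht)) hno hgne
              (.inr (by simp)) (.inl ⟨hu'b, ?_⟩)
            show ω * Real.cos (ω * (b - z (k - 1))) = 0
            rw [hval, Real.cos_pi_div_two, mul_zero]
          · -- 0 < k < m : interval (z (k-1), z k), comparison sin(ω(·-z (k-1)))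
            rw [hLk k (by omega), hRk k (by omega)] at hno
            have hcd : z (k - 1) < z k := hzlt _ _ (by omega)
            have hval : ω * (z k - z (k - 1)) = Real.pi := by
              have h1 := harg (k - 1)
              have h2 := harg k
              rw [hk1R] at h1
              have h3 : ω * (z k - z (k-1)) = ω * (z k - a) - ω * (z (k-1) - a) := by ring
              rw [h1, h2] at h3
              rw [h3]; ring
            have hsub : Icc (z (k-1)) (z k) ⊆ Icc a b :=
              Icc_subset_Icc (hza _).le (hzb k hkm).le
            have hsub' : Ioo (z (k-1)) (z k) ⊆ Ioo a b :=
              Ioo_subset_Ioo (hza _).le (hzb k hkm).le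
            have hgne : ∀ t ∈ Ioo (z (k-1)) (z k), Real.sin (ω * (t - z (k-1))) ≠ 0 := by
              intro t ht
              have h1 : 0 < ω * (t - z (k-1)) := mul_pos hωpos (by linarith [ht.1])
              have h3 := mul_lt_mul_of_pos_left (sub_lt_sub_right ht.2 (z (k-1))) hωpos
              exact (Real.sin_pos_of_pos_of_lt_pi h1 (by linarith)).ne'
            refine aux_step (F := q) (G := fun _ => ω ^ 2) hcd
              (fun t ht => hu t (hsub ht)) (fun t _ => aux_sin_deriv ω (z (k-1)) t)
              (fun t ht => by simpa using hgt t (hsub' ht)) hno hgne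
              (.inr (by simp)) (.inr ?_)
            show Real.sin (ω * (z k - z (k - 1))) = 0
            rw [hval]; exact Real.sin_pi
      choose! s hs1 hs2 using hclaim
      have hRL : ∀ i j : ℕ, i < j → j ≤ m → R i ≤ L j := by
        intro i j hij hjm
        rw [hRk i (by omega), hLk j (by omega)]
        exact hzle i (j - 1) (by omega)
      have hsmono : ∀ i j : ℕ, i < j → j ≤ m → s i < s j := by
        intro i j hij hjm
        have h1 := hs1 i (by omega)
        have h2 := hs1 j hjm
        have h3 := hRL i j hij hjm
        exact lt_trans (lt_of_lt_of_le h1.2 h3) h2.1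
      have hsab : ∀ k : ℕ, k ≤ m → s k ∈ Ioo a b := by
        intro k hk
        have h1 := hs1 k hk
        exact ⟨lt_of_le_of_lt (hLa k) h1.1, lt_of_lt_of_le h1.2 (hRb k hk)⟩
      have hinj : Set.InjOn s {k | k < m + 1} := by
        intro i hi j hj hij
        simp only [Set.mem_setOf_eq] at hi hj
        by_contra hne
        rcases Nat.lt_or_ge i j with h | h
        · exact absurd hij (ne_of_lt (hsmono i j h (by omega)))
        · have h' : j < i := by omega
          exact absurd hij.symm (ne_of_lt (hsmono j i h' (by omega)))
      have hsubZ : s '' {k | k < m + 1} ⊆ {t ∈ Set.Ioo a b | u t = 0} := by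
        rintro _ ⟨k, hk, rfl⟩
        simp only [Set.mem_setOf_eq] at hk
        exact ⟨hsab k (by omega), hs2 k (by omega)⟩
      have hcount : ((m + 1 : ℕ) : ℕ∞) ≤ ((m : ℕ) : ℕ∞) := by
        calc ((m + 1 : ℕ) : ℕ∞) = ({k | k < m + 1} : Set ℕ).encard :=
              (Set.Nat.encard_range _).symm
          _ = (s '' {k | k < m + 1}).encard := (hinj.encard_image).symm
          _ ≤ ({t ∈ Set.Ioo a b | u t = 0}).encard := Set.encard_mono hsubZ
          _ = ((m : ℕ) : ℕ∞) := hzeros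
      have : m + 1 ≤ m := by exact_mod_cast hcount
      omega
  · -- Case B : q < ω² on (a,b)
    rcases Nat.eq_zero_or_pos m with hm0 | hmpos
    · -- m = 0
      subst hm0
      have hω0 : ω = 0 := by rw [hωdef]; simp
      have hZ : {t | t ∈ Ioo a b ∧ u t = 0} = ∅ := by
        rw [← Set.encard_eq_zero]; exact_mod_cast hzeros
      have hgne : ∀ t ∈ Ioo a b, u t ≠ 0 := by
        intro t ht h
        exact Set.notMem_empty t (by rw [← hZ]; exact ⟨ht, h⟩)
      have hfne : ∀ t ∈ Ioo a b, Real.cos (ω * (t - a)) ≠ 0 := by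
        intro t _; rw [hω0]; simp
      exact aux_step (F := fun _ => ω ^ 2) (G := q) hab
        (fun t _ => aux_cos_deriv ω a t) (fun t ht => hu t ht)
        (fun t ht => by simpa using (hlt t ht)) hfne hgne
        (.inl ⟨by simp, hu'a⟩) (.inl ⟨by rw [hω0]; simp, hu'b⟩)
    · -- m ≥ 1
      have hmR : (0:ℝ) < (m:ℝ) := Nat.cast_pos.2 hmpos
      have hmne : (m:ℝ) ≠ 0 := ne_of_gt hmR
      have hωpos : 0 < ω := by rw [hωdef]; exact div_pos (mul_pos hmR hπ) hba
      have hfin : ({t ∈ Set.Ioo a b | u t = 0}).Finite := Set.finite_of_encard_eq_coe hzeros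
      have hcard : hfin.toFinset.card = m := by
        have h1 := hfin.encard_eq_coe_toFinset_card
        rw [hzeros] at h1
        exact_mod_cast h1.symm
      obtain ⟨sB, hsBval⟩ : ∃ sB : ℕ → ℝ, ∀ j (h : j < m),
          sB j = ((hfin.toFinset.orderIsoOfFin hcard) ⟨j, h⟩ : ℝ) := by
        refine ⟨fun j => if h : j < m then ((hfin.toFinset.orderIsoOfFin hcard) ⟨j, h⟩ : ℝ)
          else 0, fun j h => by simp [h]⟩
      have hsBmem : ∀ j, j < m → sB j ∈ Ioo a b ∧ u (sB j) = 0 := by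
        intro j h
        rw [hsBval j h]
        have h1 : ((hfin.toFinset.orderIsoOfFin hcard) ⟨j, h⟩ : ℝ) ∈ hfin.toFinset :=
          ((hfin.toFinset.orderIsoOfFin hcard) ⟨j, h⟩).2
        rwa [Set.Finite.mem_toFinset] at h1
      have hsBlt : ∀ i j : ℕ, i < j → j < m → sB i < sB j := by
        intro i j hij hjm
        have him : i < m := lt_trans hij hjm
        rw [hsBval i him, hsBval j hjm]
        exact (hfin.toFinset.orderIsoOfFin hcard).strictMono
          (show (⟨i, him⟩ : Fin m) < ⟨j, hjm⟩ from hij)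
      have hsBle : ∀ i j : ℕ, i ≤ j → j < m → sB i ≤ sB j := by
        intro i j hij hjm
        rcases eq_or_lt_of_le hij with h | h
        · rw [h]
        · exact (hsBlt i j h hjm).le
      have hZmem : ∀ t, t ∈ Ioo a b → u t = 0 → ∃ j, j < m ∧ sB j = t := by
        intro t h1 h2
        have ht : t ∈ hfin.toFinset := by
          rw [Set.Finite.mem_toFinset]; exact ⟨h1, h2⟩
        obtain ⟨i, hi⟩ := (hfin.toFinset.orderIsoOfFin hcard).surjective ⟨t, ht⟩
        refine ⟨i.1, i.2, ?_⟩
        rw [hsBval i.1 i.2]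
        simp only [Fin.eta, hi]
      obtain ⟨L, hL0, hLk⟩ : ∃ L : ℕ → ℝ, L 0 = a ∧ ∀ k, k ≠ 0 → L k = sB (k - 1) :=
        ⟨fun k => if k = 0 then a else sB (k - 1), by simp, fun k hk => by simp [hk]⟩
      obtain ⟨R, hRm, hRk⟩ : ∃ R : ℕ → ℝ, R m = b ∧ ∀ k, k ≠ m → R k = sB k :=
        ⟨fun k => if k = m then b else sB k, by simp, fun k hk => by simp [hk]⟩
      have hLa : ∀ k : ℕ, k ≤ m → a ≤ L k := by
        intro k hk
        by_cases h : k = 0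
        · rw [h, hL0]
        · rw [hLk k h]; exact (hsBmem (k-1) (by omega)).1.1.le
      have hRb : ∀ k : ℕ, k ≤ m → R k ≤ b := by
        intro k hk
        by_cases h : k = m
        · rw [h, hRm]
        · rw [hRk k h]; exact (hsBmem k (by omega)).1.2.le
      have hLR : ∀ k : ℕ, k ≤ m → L k < R k := by
        intro k hk
        by_cases h0 : k = 0
        · subst h0
          rw [hL0, hRk 0 (by omega)]
          exact (hsBmem 0 hmpos).1.1
        · by_cases hm : k = m
          · have hRkb : R k = b := by rw [hm, hRm]
            rw [hLk k h0, hRkb]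
            exact (hsBmem (k-1) (by omega)).1.2
          · rw [hLk k h0, hRk k hm]
            exact hsBlt (k-1) k (by omega) (by omega)
      -- the key claims: cos(ω(·-a)) must vanish in each of the m+1 gaps
      have hclaim : ∀ k, k ≤ m →
          ∃ t, t ∈ Ioo (L k) (R k) ∧ Real.cos (ω * (t - a)) = 0 := by
        intro k hk
        by_contra hno
        push_neg at hno
        have hcd : L k < R k := hLR k hk
        have hsub : Icc (L k) (R k) ⊆ Icc a b := Icc_subset_Icc (hLa k hk) (hRb k hk)
        have hsub' : Ioo (L k) (R k) ⊆ Ioo a b := Ioo_subset_Ioo (hLa k hk) (hRb k hk)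
        have hgne : ∀ t ∈ Ioo (L k) (R k), u t ≠ 0 := by
          intro t ht h0
          obtain ⟨j, hj, rfl⟩ := hZmem t (hsub' ht) h0
          have hjk : j < k := by
            rcases Nat.lt_or_ge k m with hkm | hkm
            · by_contra hge
              push_neg at hge
              have h2 := hsBle k j hge hj
              have h3 : sB j < sB k := by rw [hRk k (by omega)] at ht; exact ht.2
              linarith
            · omega
          have h3 : sB (k-1) < sB j := by rw [hLk k (by omega)] at ht; exact ht.1
          have h4 : sB j ≤ sB (k-1) := hsBle j (k-1) (by omega) (by omega)
          linarith
        have hbc : ((fun s => -(ω * Real.sin (ω * (s - a)))) (L k) = 0 ∧ u' (L k) = 0) ∨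
            u (L k) = 0 := by
          by_cases h0 : k = 0
          · subst h0; rw [hL0]; exact .inl ⟨by simp, hu'a⟩
          · rw [hLk k h0]
            exact .inr (hsBmem (k-1) (by omega)).2
        have hbd : ((fun s => -(ω * Real.sin (ω * (s - a)))) (R k) = 0 ∧ u' (R k) = 0) ∨
            u (R k) = 0 := by
          by_cases hm : k = m
          · have hRkb : R k = b := by rw [hm, hRm]
            rw [hRkb]
            refine .inl ⟨?_, hu'b⟩
            show -(ω * Real.sin (ω * (b - a))) = 0
            rw [hbaval, Real.sin_nat_mul_pi, mul_zero, neg_zero]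
          · rw [hRk k hm]
            exact .inr (hsBmem k (by omega)).2
        exact aux_step (F := fun _ => ω ^ 2) (G := q) hcd
          (fun t _ => aux_cos_deriv ω a t) (fun t ht => hu t (hsub ht))
          (fun t ht => by simpa using hlt t (hsub' ht)) hno hgne hbc hbd
      choose! w hw1 hw2 using hclaim
      have hRL : ∀ i j : ℕ, i < j → j ≤ m → R i ≤ L j := by
        intro i j hij hjm
        rw [hRk i (by omega), hLk j (by omega)]
        exact hsBle i (j - 1) (by omega) (by omega)
      have hwmono : ∀ i j : ℕ, i < j → j ≤ m → w i < w j := by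
        intro i j hij hjm
        have h1 := hw1 i (by omega)
        have h2 := hw1 j hjm
        exact lt_trans (lt_of_lt_of_le h1.2 (hRL i j hij hjm)) h2.1
      have hwab : ∀ k : ℕ, k ≤ m → w k ∈ Ioo a b := by
        intro k hk
        have h1 := hw1 k hk
        exact ⟨lt_of_le_of_lt (hLa k hk) h1.1, lt_of_lt_of_le h1.2 (hRb k hk)⟩
      -- each zero of cos corresponds to an index < m
      have hchar : ∀ k, k ≤ m → ∃ n : ℕ, n < m ∧
          ω * (w k - a) = (2 * (n:ℝ) + 1) * Real.pi / 2 := by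
        intro k hk
        obtain ⟨j, hj⟩ := Real.cos_eq_zero_iff.1 (hw2 k hk)
        have hmem := hwab k hk
        have h1 : 0 < ω * (w k - a) := mul_pos hωpos (by linarith [hmem.1])
        have h2 : ω * (w k - a) < (m:ℝ) * Real.pi := by
          have h3 := mul_lt_mul_of_pos_left (sub_lt_sub_right hmem.2 a) hωpos
          linarith [hbaval]
        rw [hj] at h1 h2
        have hj1 : (-1:ℝ) < (j:ℝ) := by nlinarith
        have hj2 : (j:ℝ) < (m:ℝ) := by nlinarith
        have hj0 : (0:ℤ) ≤ j := by
          have h4 : (-1:ℤ) < j := by exact_mod_cast hj1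
          omega
        have hjm' : (j:ℤ) < (m:ℤ) := by exact_mod_cast hj2
        have hcast : ((j.toNat : ℕ) : ℝ) = (j:ℝ) := by exact_mod_cast Int.toNat_of_nonneg hj0
        refine ⟨j.toNat, by omega, ?_⟩
        rw [hj, hcast]
      choose! kap hκ1 hκ2 using hchar
      have hκinj : Set.InjOn kap {k | k < m + 1} := by
        intro i hi j hj hij
        simp only [Set.mem_setOf_eq] at hi hj
        by_contra hne
        have hwij : w i ≠ w j := by
          rcases Nat.lt_or_ge i j with h | h
          · exact ne_of_lt (hwmono i j h (by omega))
          · exact (ne_of_lt (hwmono j i (by omega) (by omega))).symm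
        apply hwij
        have e1 := hκ2 i (by omega)
        have e2 := hκ2 j (by omega)
        rw [hij] at e1
        have h5 : ω * (w i - a) = ω * (w j - a) := by rw [e1, e2]
        have h6 := mul_left_cancel₀ (ne_of_gt hωpos) h5
        linarith
      have hsubN : kap '' {k | k < m + 1} ⊆ {n : ℕ | n < m} := by
        rintro _ ⟨k, hk, rfl⟩
        simp only [Set.mem_setOf_eq] at hk ⊢
        exact hκ1 k (by omega)
      have hcount : ((m + 1 : ℕ) : ℕ∞) ≤ ((m : ℕ) : ℕ∞) := by
        calc ((m + 1 : ℕ) : ℕ∞) = ({k | k < m + 1} : Set ℕ).encard :=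
              (Set.Nat.encard_range _).symm
          _ = (kap '' {k | k < m + 1}).encard := (hκinj.encard_image).symm
          _ ≤ ({n : ℕ | n < m}).encard := Set.encard_mono hsubN
          _ = ((m : ℕ) : ℕ∞) := Set.Nat.encard_range _
      have : m + 1 ≤ m := by exact_mod_cast hcount
      omega
end
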